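/- Let Q(x) = ∫ₓ^∞ (1/√(2π)) e^{−t²/2} dt and fix ω̂ ∈ ℝ. Define a(ω̂) = max{ e^{−ω̂²/2} / (√(2π) Q(ω̂)), ω̂ }, b(ω̂) = (1/(√(2π) a(ω̂))) · e^{a(ω̂)ω̂ − ω̂²/2}, and c(ω̂) = Q(ω̂) − b(ω̂) e^{−a(ω̂)ω̂}. Then a(ω̂) > 0, b(ω̂) > 0, and for every ω ∈ ℝ one has Q(ω) ≤ b(ω̂) e^{−a(ω̂)ω} + c(ω̂), with equality at ω = ω̂. -/

import Mathlib

/-- The Gaussian Q-function `Q(x) = ∫ₓ^∞ (1/√(2π)) e^{−t²/2} dt`. -/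
noncomputable def gaussianQ (x : ℝ) : ℝ :=
  ∫ t in Set.Ioi x, (Real.sqrt (2 * Real.pi))⁻¹ * Real.exp (-t ^ 2 / 2)

open Real MeasureTheory Set Filter

noncomputable def phiG (t : ℝ) : ℝ := (Real.sqrt (2 * Real.pi))⁻¹ * Real.exp (-t ^ 2 / 2)

lemma sqrt2pi_pos : 0 < Real.sqrt (2 * Real.pi) :=
  Real.sqrt_pos.2 (by positivity)

lemma phiG_integrable : Integrable phiG := by
  have h := (integrable_exp_neg_mul_sq (by norm_num : (0:ℝ) < 1/2)).const_mul
    (Real.sqrt (2 * Real.pi))⁻¹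
  refine h.congr (Filter.Eventually.of_forall fun x => ?_)
  unfold phiG
  rw [show -x ^ 2 / 2 = -(1/2) * x ^ 2 from by ring]

lemma phiG_cont : Continuous phiG := by
  unfold phiG
  fun_prop

lemma phiG_pos (t : ℝ) : 0 < phiG t := by
  unfold phiG; positivity

lemma gaussianQ_pos (u : ℝ) : 0 < gaussianQ u := by
  have h1 : (0:ℝ) < ∫ t in u..(u+1), phiG t := by
    apply intervalIntegral.intervalIntegral_pos_of_pos_on
    · exact phiG_integrable.intervalIntegrable
    · exact fun x _ => phiG_pos x
    · linarith
  have h2 : (∫ t in u..(u+1), phiG t) = ∫ t in Set.Ioc u (u+1), phiG t := by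
    rw [intervalIntegral.integral_of_le (by linarith)]
  have h3 : (∫ t in Set.Ioc u (u+1), phiG t) ≤ ∫ t in Set.Ioi u, phiG t := by
    apply setIntegral_mono_set phiG_integrable.integrableOn
    · exact Filter.Eventually.of_forall fun x => (phiG_pos x).le
    · exact Filter.Eventually.of_forall fun x hx => hx.1
  have : gaussianQ u = ∫ t in Set.Ioi u, phiG t := rfl
  rw [this]; linarith [h2 ▸ h1]

lemma gaussianQ_eq (x : ℝ) : gaussianQ x = gaussianQ 0 - ∫ t in (0:ℝ)..x, phiG t := by
  have hx := intervalIntegral.integral_Iic_add_Ioi (b := x) phiG_integrable.integrableOn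
    phiG_integrable.integrableOn
  have h0 := intervalIntegral.integral_Iic_add_Ioi (b := (0:ℝ)) phiG_integrable.integrableOn
    phiG_integrable.integrableOn
  have hI : (∫ t in (0:ℝ)..x, phiG t)
      = (∫ t in Set.Iic x, phiG t) - ∫ t in Set.Iic (0:ℝ), phiG t :=
    (intervalIntegral.integral_Iic_sub_Iic phiG_integrable.integrableOn
      phiG_integrable.integrableOn).symm
  have hqx : gaussianQ x = ∫ t in Set.Ioi x, phiG t := rfl
  have hq0 : gaussianQ 0 = ∫ t in Set.Ioi (0:ℝ), phiG t := rfl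
  rw [hqx, hq0, hI]; linarith

lemma gaussianQ_hasDeriv (x : ℝ) : HasDerivAt gaussianQ (-phiG x) x := by
  have h : HasDerivAt (fun y => ∫ t in (0:ℝ)..y, phiG t) (phiG x) x := by
    apply intervalIntegral.integral_hasDerivAt_right
      phiG_integrable.intervalIntegrable
    · exact phiG_cont.stronglyMeasurableAtFilter _ _
    · exact phiG_cont.continuousAt
  have heq : gaussianQ = fun y => gaussianQ 0 - ∫ t in (0:ℝ)..y, phiG t :=
    funext gaussianQ_eq
  rw [heq]
  simpa using h.const_sub (gaussianQ 0)

lemma integrableOn_id_mul_gauss {a : ℝ} (ha : 0 < a) :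
    IntegrableOn (fun t => t * Real.exp (-t ^ 2 / 2)) (Set.Ioi a) := by
  have h := integrableOn_rpow_mul_exp_neg_mul_sq (b := 1/2) (by norm_num) (s := 1)
    (by norm_num)
  have h2 : IntegrableOn (fun x : ℝ => x ^ (1:ℝ) * Real.exp (-(1/2) * x ^ 2))
      (Set.Ioi a) := h.mono_set (Set.Ioi_subset_Ioi ha.le)
  refine h2.congr_fun (fun x hx => ?_) measurableSet_Ioi
  dsimp only
  rw [Real.rpow_one, show -x ^ 2 / 2 = -(1/2) * x ^ 2 from by ring]

lemma integral_id_mul_gauss {a : ℝ} (ha : 0 < a) :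
    ∫ t in Set.Ioi a, t * Real.exp (-t ^ 2 / 2) = Real.exp (-a ^ 2 / 2) := by
  have hderiv : ∀ x ∈ Set.Ici a, HasDerivAt (fun t => -Real.exp (-t ^ 2 / 2))
      (x * Real.exp (-x ^ 2 / 2)) x := by
    intro x _
    have h1 : HasDerivAt (fun t : ℝ => -t ^ 2 / 2) (-x) x := by
      have := ((hasDerivAt_pow 2 x).neg).div_const 2
      simpa using this.congr_deriv (by ring)
    have := (h1.exp).neg
    refine this.congr_deriv ?_
    ring
  have htend : Tendsto (fun t : ℝ => -Real.exp (-t ^ 2 / 2)) atTop (nhds 0) := by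
    rw [show (0:ℝ) = -0 by norm_num]
    apply Tendsto.neg
    apply Real.tendsto_exp_atBot.comp
    apply Filter.Tendsto.atBot_div_const (by norm_num : (0:ℝ) < 2)
    exact tendsto_neg_atBot_iff.mpr (tendsto_pow_atTop (by norm_num))
  have := MeasureTheory.integral_Ioi_of_hasDerivAt_of_tendsto' hderiv
    (integrableOn_id_mul_gauss ha) htend
  rw [this]; ring

lemma gaussianQ_le {w : ℝ} (hw : 0 < w) :
    gaussianQ w ≤ (Real.sqrt (2 * Real.pi))⁻¹ * (Real.exp (-w ^ 2 / 2) / w) := by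
  have hmono : gaussianQ w ≤ ∫ t in Set.Ioi w,
      (Real.sqrt (2 * Real.pi))⁻¹ * w⁻¹ * (t * Real.exp (-t ^ 2 / 2)) := by
    apply setIntegral_mono_on phiG_integrable.integrableOn
    · exact (((integrableOn_id_mul_gauss hw).const_mul _))
    · exact measurableSet_Ioi
    · intro t ht
      have ht' : w < t := ht
      have h1 : (1:ℝ) ≤ t / w := (one_le_div hw).2 ht'.le
      have : phiG t * 1 ≤ phiG t * (t / w) :=
        mul_le_mul_of_nonneg_left h1 (phiG_pos t).le
      calc (Real.sqrt (2 * Real.pi))⁻¹ * Real.exp (-t ^ 2 / 2) = phiG t * 1 := by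
            unfold phiG; ring
        _ ≤ phiG t * (t / w) := this
        _ = (Real.sqrt (2 * Real.pi))⁻¹ * w⁻¹ * (t * Real.exp (-t ^ 2 / 2)) := by
            unfold phiG; field_simp
  rw [MeasureTheory.integral_const_mul, integral_id_mul_gauss hw] at hmono
  calc gaussianQ w ≤ _ := hmono
    _ = (Real.sqrt (2 * Real.pi))⁻¹ * (Real.exp (-w ^ 2 / 2) / w) := by
        field_simp


/-- `a(u) = max{ e^{−u²/2} / (√(2π) Q(u)), u }`. -/
noncomputable def aQ (u : ℝ) : ℝ :=
  max (Real.exp (-u ^ 2 / 2) / (Real.sqrt (2 * Real.pi) * gaussianQ u)) u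

/-- `b(u) = (1/(√(2π) a(u))) · e^{a(u)·u − u²/2}`. -/
noncomputable def bQ (u : ℝ) : ℝ :=
  (Real.sqrt (2 * Real.pi) * aQ u)⁻¹ * Real.exp (aQ u * u - u ^ 2 / 2)

/-- `c(u) = Q(u) − b(u) e^{−a(u)·u}`. -/
noncomputable def cQ (u : ℝ) : ℝ := gaussianQ u - bQ u * Real.exp (-aQ u * u)

/-- paper's Lemma 3, upper bound: for every `ω̂ ∈ ℝ`, `a(ω̂) > 0`,
`b(ω̂) > 0`, and `Q(ω) ≤ b(ω̂) e^{−a(ω̂)ω} + c(ω̂)` for all `ω`, with equality at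
`ω = ω̂`. -/
theorem statement4 (w0 : ℝ) :
    0 < aQ w0 ∧ 0 < bQ w0 ∧
    (∀ ω : ℝ, gaussianQ ω ≤ bQ w0 * Real.exp (-aQ w0 * ω) + cQ w0) ∧
    gaussianQ w0 = bQ w0 * Real.exp (-aQ w0 * w0) + cQ w0 := by
  have hspos : 0 < Real.sqrt (2 * Real.pi) := sqrt2pi_pos
  have hQpos := gaussianQ_pos w0
  have ha0 : 0 < aQ w0 := lt_of_lt_of_le (by positivity) (le_max_left _ w0)
  have haw : w0 ≤ aQ w0 := le_max_right _ _
  have haQ : Real.exp (-w0 ^ 2 / 2) / (Real.sqrt (2 * Real.pi) * gaussianQ w0) ≤ aQ w0 :=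
    le_max_left _ _
  have hb0 : 0 < bQ w0 := by unfold bQ; positivity
  have hexp0 : Real.exp (-w0 ^ 2 / 2) ≤ aQ w0 * (Real.sqrt (2 * Real.pi) * gaussianQ w0) :=
    (div_le_iff₀ (by positivity)).mp haQ
  have hbdef : bQ w0 = (Real.sqrt (2 * Real.pi) * aQ w0)⁻¹
      * Real.exp (aQ w0 * w0 - w0 ^ 2 / 2) := rfl
  have hbe : bQ w0 * Real.exp (-aQ w0 * w0)
      = (Real.sqrt (2 * Real.pi) * aQ w0)⁻¹ * Real.exp (-w0 ^ 2 / 2) := by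
    rw [hbdef, mul_assoc, ← Real.exp_add]
    congr 2
    ring
  have hc0 : 0 ≤ cQ w0 := by
    unfold cQ
    rw [hbe, sub_nonneg, inv_mul_le_iff₀ (by positivity)]
    nlinarith [hexp0]
  have he : gaussianQ w0 = bQ w0 * Real.exp (-aQ w0 * w0) + cQ w0 := by
    unfold cQ; ring
  refine ⟨ha0, hb0, ?_, he⟩
  -- the function g
  set g : ℝ → ℝ := fun x => bQ w0 * Real.exp (-aQ w0 * x) + cQ w0 - gaussianQ x with hgdef
  have hgoal : ∀ ω, 0 ≤ g ω → gaussianQ ω ≤ bQ w0 * Real.exp (-aQ w0 * ω) + cQ w0 := by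
    intro ω h; simp only [hgdef] at h; linarith
  have hgw0 : g w0 = 0 := by simp only [hgdef]; linarith
  have hg : ∀ x, HasDerivAt g (phiG x - aQ w0 * bQ w0 * Real.exp (-aQ w0 * x)) x := by
    intro x
    have h1 : HasDerivAt (fun y : ℝ => -aQ w0 * y) (-aQ w0) x := by
      simpa using (hasDerivAt_id x).const_mul (-aQ w0)
    have h2 := ((h1.exp).const_mul (bQ w0)).add_const (cQ w0)
    have h3 := h2.sub (gaussianQ_hasDeriv x)
    refine h3.congr_deriv ?_
    ring
  have habe : ∀ x, aQ w0 * bQ w0 * Real.exp (-aQ w0 * x)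
      = (Real.sqrt (2 * Real.pi))⁻¹ * Real.exp (aQ w0 * w0 - w0 ^ 2 / 2 - aQ w0 * x) := by
    intro x
    rw [hbdef]
    rw [show aQ w0 * ((Real.sqrt (2 * Real.pi) * aQ w0)⁻¹
        * Real.exp (aQ w0 * w0 - w0 ^ 2 / 2)) * Real.exp (-aQ w0 * x)
        = (Real.sqrt (2 * Real.pi))⁻¹ * (aQ w0 * (aQ w0)⁻¹)
          * (Real.exp (aQ w0 * w0 - w0 ^ 2 / 2) * Real.exp (-aQ w0 * x)) from by
      rw [mul_inv]; ring]
    rw [mul_inv_cancel₀ ha0.ne', ← Real.exp_add, mul_one]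
    congr 1
    ring
  intro ω
  rcases le_total ω w0 with hω | hω
  · -- antitone on Iic w0
    have hanti : AntitoneOn g (Set.Iic w0) := by
      apply antitoneOn_of_hasDerivWithinAt_nonpos (convex_Iic w0)
        (fun x _ => (hg x).continuousAt.continuousWithinAt)
        (fun x _ => (hg x).hasDerivWithinAt)
      intro x hx
      rw [interior_Iic] at hx
      have hxw : x ≤ w0 := hx.le
      rw [sub_nonpos, habe x]
      unfold phiG
      apply mul_le_mul_of_nonneg_left _ (by positivity)
      apply Real.exp_le_exp.mpr
      nlinarith [mul_nonneg (sub_nonneg.mpr haw) (sub_nonneg.mpr hxw),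
        sq_nonneg (w0 - x)]
    have := hanti (Set.mem_Iic.mpr hω) (Set.mem_Iic.mpr le_rfl) hω
    exact hgoal ω (by linarith [hgw0 ▸ this])
  · rcases le_total ω (2 * aQ w0 - w0) with hω2 | hω2
    · -- monotone on Icc w0 (2a - w0)
      have hmono : MonotoneOn g (Set.Icc w0 (2 * aQ w0 - w0)) := by
        apply monotoneOn_of_hasDerivWithinAt_nonneg (convex_Icc _ _)
          (fun x _ => (hg x).continuousAt.continuousWithinAt)
          (fun x _ => (hg x).hasDerivWithinAt)
        intro x hx
        rw [interior_Icc] at hx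
        rw [sub_nonneg, habe x]
        unfold phiG
        apply mul_le_mul_of_nonneg_left _ (by positivity)
        apply Real.exp_le_exp.mpr
        nlinarith [mul_nonneg (sub_nonneg.mpr hx.1.le) (sub_nonneg.mpr hx.2.le)]
      have hw0mem : w0 ∈ Set.Icc w0 (2 * aQ w0 - w0) := ⟨le_rfl, by linarith⟩
      have := hmono hw0mem ⟨hω, hω2⟩ hω
      exact hgoal ω (by linarith [hgw0 ▸ this])
    · -- tail: ω ≥ 2a - w0 ≥ a > 0
      have haω : aQ w0 ≤ ω := by linarith
      have hωpos : 0 < ω := lt_of_lt_of_le ha0 haω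
      have h1 := gaussianQ_le hωpos
      have hexple : Real.exp (-ω ^ 2 / 2)
          ≤ Real.exp (aQ w0 * w0 - w0 ^ 2 / 2 - aQ w0 * ω) := by
        apply Real.exp_le_exp.mpr
        nlinarith [mul_nonneg (sub_nonneg.mpr hω) (sub_nonneg.mpr hω2)]
      have h2 : Real.exp (-ω ^ 2 / 2) / ω
          ≤ Real.exp (aQ w0 * w0 - w0 ^ 2 / 2 - aQ w0 * ω) / aQ w0 :=
        div_le_div₀ (Real.exp_nonneg _) hexple ha0 haω
      have h3 : bQ w0 * Real.exp (-aQ w0 * ω)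
          = (Real.sqrt (2 * Real.pi))⁻¹
            * (Real.exp (aQ w0 * w0 - w0 ^ 2 / 2 - aQ w0 * ω) / aQ w0) := by
        have := habe ω
        field_simp at this ⊢
        nlinarith [this]
      have h4 : gaussianQ ω ≤ bQ w0 * Real.exp (-aQ w0 * ω) := by
        rw [h3]
        calc gaussianQ ω ≤ (Real.sqrt (2 * Real.pi))⁻¹ * (Real.exp (-ω ^ 2 / 2) / ω) := h1
          _ ≤ _ := mul_le_mul_of_nonneg_left h2 (by positivity)
      linarith
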